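/- Let q ≥ 1, s ≥ 1, let V be a q×q complex unitary matrix, and let ν be a finite unitary ensemble on U(q) given by unitaries U_1, …, U_m with weights p_1, …, p_m ≥ 0 summing to 1. Then | ∑_k p_k·(|tr(V†U_k)|/q)^{2s} − ∫_{U(q)} (|tr(V†U)|/q)^{2s} dμ(U) | ≤ ‖M_ν^{(s)} − M_Haar^{(s)}‖. -/

import Mathlib

open Matrix MeasureTheory

noncomputable instance (q : ℕ) : MeasurableSpace (Matrix.unitaryGroup (Fin q) ℂ) := borel _
instance (q : ℕ) : BorelSpace (Matrix.unitaryGroup (Fin q) ℂ) := ⟨rfl⟩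

/-- The operator norm of a square complex matrix (largest singular value). -/
noncomputable def opNorm {n : Type*} [Fintype n] [DecidableEq n] (A : Matrix n n ℂ) : ℝ :=
  ‖Matrix.toEuclideanCLM (𝕜 := ℂ) A‖

/-- The matrix `U^{⊗s,s} = U^{⊗s} ⊗ (conj U)^{⊗s}`. -/
def tensorTT (q s : ℕ) (U : Matrix (Fin q) (Fin q) ℂ) :
    Matrix ((Fin s → Fin q) × (Fin s → Fin q)) ((Fin s → Fin q) × (Fin s → Fin q)) ℂ :=
  Matrix.of fun i j => (∏ r, U (i.1 r) (j.1 r)) * ∏ r, (starRingEnd ℂ) (U (i.2 r) (j.2 r))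

/-- The `s`-th moment operator `M_ν^{(s)} = ∑ₖ pₖ Uₖ^{⊗s,s}` of a finite unitary ensemble. -/
noncomputable def momentOp (q s m : ℕ) (p : Fin m → ℝ)
    (U : Fin m → Matrix.unitaryGroup (Fin q) ℂ) :
    Matrix ((Fin s → Fin q) × (Fin s → Fin q)) ((Fin s → Fin q) × (Fin s → Fin q)) ℂ :=
  ∑ k, (p k : ℂ) • tensorTT q s (U k : Matrix (Fin q) (Fin q) ℂ)

/-- The `s`-th Haar moment operator `M_Haar^{(s)} = ∫ U^{⊗s,s} dμ(U)`, defined entrywise. -/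
noncomputable def MHaarOp (q s : ℕ) (μ : Measure (Matrix.unitaryGroup (Fin q) ℂ)) :
    Matrix ((Fin s → Fin q) × (Fin s → Fin q)) ((Fin s → Fin q) × (Fin s → Fin q)) ℂ :=
  Matrix.of fun i j => ∫ U, tensorTT q s (U : Matrix (Fin q) (Fin q) ℂ) i j ∂μ

open scoped ComplexConjugate

section Aux

lemma prod_mul_entry (q s : ℕ) (M N : Matrix (Fin q) (Fin q) ℂ) (a b : Fin s → Fin q) :
    (∏ r, (M * N) (a r) (b r))
      = ∑ c : Fin s → Fin q, (∏ r, M (a r) (c r)) * ∏ r, N (c r) (b r) := by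
  simp_rw [Matrix.mul_apply]
  rw [Fintype.prod_sum (f := fun r x => M (a r) x * N x (b r))]
  simp_rw [Finset.prod_mul_distrib]

lemma tensorTT_mul (q s : ℕ) (A B : Matrix (Fin q) (Fin q) ℂ) :
    tensorTT q s (A * B) = tensorTT q s A * tensorTT q s B := by
  ext i j
  have hconj : ∀ (a b : Fin s → Fin q), (∏ r, conj ((A * B) (a r) (b r)))
      = ∑ c : Fin s → Fin q, (∏ r, conj (A (a r) (c r))) * ∏ r, conj (B (c r) (b r)) := by
    intro a b
    simpa [← Matrix.map_mul, Matrix.map_apply] using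
      prod_mul_entry q s (A.map (starRingEnd ℂ)) (B.map (starRingEnd ℂ)) a b
  conv_rhs => rw [Matrix.mul_apply]
  simp only [tensorTT, Matrix.of_apply]
  rw [prod_mul_entry, hconj, Finset.sum_mul_sum, Fintype.sum_prod_type]
  exact Finset.sum_congr rfl fun c _ => Finset.sum_congr rfl fun d _ => mul_mul_mul_comm _ _ _ _

lemma tensorTT_one (q s : ℕ) : tensorTT q s (1 : Matrix (Fin q) (Fin q) ℂ) = 1 := by
  have key : ∀ (f g : Fin s → Fin q),
      (∏ r, if f r = g r then (1 : ℂ) else 0) = if f = g then 1 else 0 := by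
    intro f g
    by_cases h : f = g
    · simp [h]
    · obtain ⟨r, hr⟩ := Function.ne_iff.mp h
      rw [if_neg h]
      exact Finset.prod_eq_zero (Finset.mem_univ r) (if_neg hr)
  ext i j
  simp only [tensorTT, Matrix.of_apply, Matrix.one_apply, apply_ite (starRingEnd ℂ),
    _root_.map_one, _root_.map_zero, key]
  by_cases h1 : i.1 = j.1 <;> by_cases h2 : i.2 = j.2 <;>
    simp [h1, h2, Prod.ext_iff]

lemma tensorTT_conjTranspose (q s : ℕ) (A : Matrix (Fin q) (Fin q) ℂ) :
    tensorTT q s Aᴴ = (tensorTT q s A)ᴴ := by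
  ext i j
  simp only [tensorTT, Matrix.of_apply, Matrix.conjTranspose_apply, RCLike.star_def,
    _root_.map_mul, map_prod, Complex.conj_conj]

lemma trace_tensorTT (q s : ℕ) (C : Matrix (Fin q) (Fin q) ℂ) :
    (tensorTT q s C).trace = C.trace ^ s * conj (C.trace ^ s) := by
  simp only [Matrix.trace, Matrix.diag, tensorTT, Matrix.of_apply, map_pow, map_sum]
  rw [Fintype.sum_prod_type]
  dsimp only
  rw [← Finset.sum_mul_sum,
    ← Fintype.sum_pow (fun x => C x x) s, ← Fintype.sum_pow (fun x => conj (C x x)) s]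

lemma inner_single_toEuclideanCLM {n : Type*} [Fintype n] [DecidableEq n]
    (M : Matrix n n ℂ) (i j : n) :
    (inner ℂ (EuclideanSpace.single i (1:ℂ))
      (Matrix.toEuclideanCLM (𝕜 := ℂ) M (EuclideanSpace.single j (1:ℂ))) : ℂ) = M i j := by
  rw [← EuclideanSpace.toLp_single j (1:ℂ), Matrix.toEuclideanCLM_toLp,
    EuclideanSpace.inner_single_left]
  simp [Matrix.toLin'_apply, Matrix.mulVec_single]

lemma norm_toEuclideanCLM_apply_of_unitary {n : Type*} [Fintype n] [DecidableEq n]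
    {A : Matrix n n ℂ} (hA : Aᴴ * A = 1) (v : EuclideanSpace ℂ n) :
    ‖Matrix.toEuclideanCLM (𝕜 := ℂ) A v‖ = ‖v‖ := by
  set f := Matrix.toEuclideanCLM (𝕜 := ℂ) A with hf
  have hstar : Matrix.toEuclideanCLM (𝕜 := ℂ) Aᴴ = ContinuousLinearMap.adjoint f := by
    rw [hf, ← ContinuousLinearMap.star_eq_adjoint, ← map_star, Matrix.star_eq_conjTranspose]
  have hmul : ContinuousLinearMap.adjoint f * f = 1 := by
    rw [← hstar, hf, ← _root_.map_mul, hA, _root_.map_one]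
  have h1 : ContinuousLinearMap.adjoint f (f v) = v := by
    have := congrArg (fun (T : EuclideanSpace ℂ n →L[ℂ] EuclideanSpace ℂ n) => T v) hmul
    simpa using this
  have h2 : (inner ℂ (f v) (f v) : ℂ) = inner ℂ v v := by
    calc (inner ℂ (f v) (f v) : ℂ)
        = inner ℂ v (ContinuousLinearMap.adjoint f (f v)) :=
          (ContinuousLinearMap.adjoint_inner_right f v (f v)).symm
      _ = inner ℂ v v := by rw [h1]
  rw [inner_self_eq_norm_sq_to_K, inner_self_eq_norm_sq_to_K] at h2
  have h3 : ‖f v‖ ^ 2 = ‖v‖ ^ 2 := by exact_mod_cast h2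
  nlinarith [norm_nonneg (f v), norm_nonneg v]

lemma abs_trace_mul_le {n : Type*} [Fintype n] [DecidableEq n]
    (A D : Matrix n n ℂ) (hA2 : A * Aᴴ = 1) :
    ‖(A * D).trace‖ ≤ (Fintype.card n : ℝ) * opNorm D := by
  set f := Matrix.toEuclideanCLM (𝕜 := ℂ) A with hf
  set g := Matrix.toEuclideanCLM (𝕜 := ℂ) D with hg
  have hstar : Matrix.toEuclideanCLM (𝕜 := ℂ) Aᴴ = ContinuousLinearMap.adjoint f := by
    rw [hf, ← ContinuousLinearMap.star_eq_adjoint, ← map_star, Matrix.star_eq_conjTranspose]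
  have key : ∀ i : n, ‖(A * D) i i‖ ≤ opNorm D := by
    intro i
    set e : EuclideanSpace ℂ n := EuclideanSpace.single i (1:ℂ) with he
    have h1 : (A * D) i i = inner ℂ (ContinuousLinearMap.adjoint f e) (g e) := by
      rw [← inner_single_toEuclideanCLM (A * D) i i, _root_.map_mul,
        ContinuousLinearMap.adjoint_inner_left]
      rfl
    have h2 : ‖ContinuousLinearMap.adjoint f e‖ = 1 := by
      rw [← hstar,
        norm_toEuclideanCLM_apply_of_unitary (by rwa [Matrix.conjTranspose_conjTranspose]),
        he, EuclideanSpace.norm_single, norm_one]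
    calc ‖(A * D) i i‖ = ‖(inner ℂ (ContinuousLinearMap.adjoint f e) (g e) : ℂ)‖ := by
          rw [h1]
      _ ≤ ‖ContinuousLinearMap.adjoint f e‖ * ‖g e‖ := norm_inner_le_norm _ _
      _ = ‖g e‖ := by rw [h2, one_mul]
      _ ≤ ‖g‖ * ‖e‖ := g.le_opNorm e
      _ = opNorm D := by rw [he, EuclideanSpace.norm_single, norm_one, mul_one]; rfl
  calc ‖(A * D).trace‖ ≤ ∑ i, ‖(A * D) i i‖ := by
        simpa [Matrix.trace, Matrix.diag] using
          norm_sum_le Finset.univ (fun i => (A * D) i i)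
    _ ≤ ∑ _i : n, opNorm D := Finset.sum_le_sum fun i _ => key i
    _ = (Fintype.card n : ℝ) * opNorm D := by rw [Finset.sum_const, nsmul_eq_mul, Fintype.card]

lemma pow_mul_conj_pow (z : ℂ) (s : ℕ) :
    z ^ s * conj (z ^ s) = ((‖z‖ ^ (2 * s) : ℝ) : ℂ) := by
  rw [Complex.mul_conj, map_pow, Complex.normSq_eq_norm_sq, ← pow_mul]

end Aux

/-- The difference between the ensemble average and the Haar average of
`(|tr(VᴴU)|/q)^{2s}` is bounded by `‖M_ν^{(s)} - M_Haar^{(s)}‖`. -/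
theorem ensemble_haar_trace_moment_bound
    (q s m : ℕ) (hq : 1 ≤ q) (hs : 1 ≤ s) (hm : 1 ≤ m)
    (V : Matrix (Fin q) (Fin q) ℂ) (hV : V ∈ Matrix.unitaryGroup (Fin q) ℂ)
    (p : Fin m → ℝ) (hp : ∀ k, 0 ≤ p k) (hpsum : ∑ k, p k = 1)
    (U : Fin m → Matrix.unitaryGroup (Fin q) ℂ)
    (μ : Measure (Matrix.unitaryGroup (Fin q) ℂ))
    [μ.IsMulLeftInvariant] [IsProbabilityMeasure μ] :
    |(∑ k, p k * (‖(Vᴴ * (U k : Matrix (Fin q) (Fin q) ℂ)).trace‖ / q) ^ (2 * s)) -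
        ∫ W, (‖(Vᴴ * (W : Matrix.unitaryGroup (Fin q) ℂ) : Matrix (Fin q) (Fin q) ℂ).trace‖ / q) ^ (2 * s) ∂μ| ≤
      opNorm (momentOp q s m p U - MHaarOp q s μ) := by
  classical
  have hV1 : Vᴴ * V = 1 := by
    simpa [Matrix.star_eq_conjTranspose] using hV.1
  have hV2 : V * Vᴴ = 1 := by
    simpa [Matrix.star_eq_conjTranspose] using hV.2
  set A := tensorTT q s Vᴴ with hAdef
  set D := momentOp q s m p U - MHaarOp q s μ with hDdef
  have hAconj : Aᴴ = tensorTT q s V := by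
    rw [hAdef, ← tensorTT_conjTranspose, Matrix.conjTranspose_conjTranspose]
  have hAu2 : A * Aᴴ = 1 := by
    rw [hAconj, hAdef, ← tensorTT_mul, hV1, tensorTT_one]
  -- pointwise identity
  have hpt : ∀ W : Matrix (Fin q) (Fin q) ℂ,
      (A * tensorTT q s W).trace
        = ((‖(Vᴴ * W).trace‖ ^ (2 * s) : ℝ) : ℂ) := by
    intro W
    rw [hAdef, ← tensorTT_mul, trace_tensorTT, pow_mul_conj_pow]
  -- ensemble part
  have hMom : (A * momentOp q s m p U).trace
      = ((∑ k, p k * ‖(Vᴴ * (U k : Matrix (Fin q) (Fin q) ℂ)).trace‖ ^ (2 * s) : ℝ) : ℂ) := by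
    rw [momentOp, Finset.mul_sum, Matrix.trace_sum]
    simp_rw [Matrix.mul_smul, Matrix.trace_smul, hpt, smul_eq_mul]
    push_cast
    rfl
  -- integrability
  have hcont : ∀ i j, Continuous
      (fun W : Matrix.unitaryGroup (Fin q) ℂ => tensorTT q s (W : Matrix (Fin q) (Fin q) ℂ) i j) := by
    intro i j
    simp only [tensorTT, Matrix.of_apply]
    exact (continuous_finset_prod _ fun r _ => continuous_subtype_val.matrix_elem _ _).mul
      (continuous_finset_prod _ fun r _ =>
        continuous_star.comp (continuous_subtype_val.matrix_elem _ _))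
  have hbdd : ∀ i j (W : Matrix.unitaryGroup (Fin q) ℂ),
      ‖tensorTT q s (W : Matrix (Fin q) (Fin q) ℂ) i j‖ ≤ 1 := by
    intro i j W
    have he : ∀ a b, ‖(W : Matrix (Fin q) (Fin q) ℂ) a b‖ ≤ 1 := fun a b =>
      entry_norm_bound_of_unitary W.2 a b
    simp only [tensorTT, Matrix.of_apply]
    rw [norm_mul, norm_prod, norm_prod]
    have h1 : (∏ r, ‖(W : Matrix (Fin q) (Fin q) ℂ) (i.1 r) (j.1 r)‖) ≤ 1 :=
      Finset.prod_le_one (fun r _ => norm_nonneg _) (fun r _ => he _ _)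
    have h2 : (∏ r, ‖(starRingEnd ℂ) ((W : Matrix (Fin q) (Fin q) ℂ) (i.2 r) (j.2 r))‖) ≤ 1 :=
      Finset.prod_le_one (fun r _ => norm_nonneg _)
        (fun r _ => by rw [RCLike.norm_conj]; exact he _ _)
    have h1' : (0:ℝ) ≤ ∏ r, ‖(starRingEnd ℂ) ((W : Matrix (Fin q) (Fin q) ℂ) (i.2 r) (j.2 r))‖ :=
      Finset.prod_nonneg fun r _ => norm_nonneg _
    exact mul_le_one₀ h1 h1' h2
  have hint : ∀ i j, Integrable
      (fun W : Matrix.unitaryGroup (Fin q) ℂ => tensorTT q s (W : Matrix (Fin q) (Fin q) ℂ) i j) μ :=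
    fun i j => ⟨(hcont i j).aestronglyMeasurable,
      HasFiniteIntegral.of_bounded (C := 1) (Filter.Eventually.of_forall (hbdd i j))⟩
  -- Haar part
  have htrsum : ∀ (B M : Matrix ((Fin s → Fin q) × (Fin s → Fin q)) ((Fin s → Fin q) × (Fin s → Fin q)) ℂ),
      (B * M).trace = ∑ ij : ((Fin s → Fin q) × (Fin s → Fin q)) × ((Fin s → Fin q) × (Fin s → Fin q)),
        B ij.1 ij.2 * M ij.2 ij.1 := by
    intro B M
    rw [Matrix.trace]
    simp_rw [Matrix.diag, Matrix.mul_apply]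
    exact (Fintype.sum_prod_type (f := fun ij => B ij.1 ij.2 * M ij.2 ij.1)).symm
  have hHaar : (A * MHaarOp q s μ).trace
      = ∫ W, (A * tensorTT q s ((W : Matrix.unitaryGroup (Fin q) ℂ) : Matrix (Fin q) (Fin q) ℂ)).trace ∂μ := by
    rw [htrsum]
    simp_rw [MHaarOp, Matrix.of_apply, ← integral_const_mul]
    rw [← integral_finset_sum]
    · congr 1
      funext W
      rw [htrsum]
    · intro ij _
      exact (hint ij.2 ij.1).const_mul _
  have hHaarVal : (A * MHaarOp q s μ).trace
      = ((∫ W, ‖(Vᴴ * (W : Matrix.unitaryGroup (Fin q) ℂ) : Matrix (Fin q) (Fin q) ℂ).trace‖ ^ (2 * s) ∂μ : ℝ) : ℂ) := by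
    rw [hHaar]
    simp_rw [hpt]
    exact integral_ofReal
  set r1 : ℝ := ∑ k, p k * ‖(Vᴴ * (U k : Matrix (Fin q) (Fin q) ℂ)).trace‖ ^ (2 * s) with hr1
  set r2 : ℝ := ∫ W, ‖(Vᴴ * (W : Matrix.unitaryGroup (Fin q) ℂ) : Matrix (Fin q) (Fin q) ℂ).trace‖ ^ (2 * s) ∂μ with hr2
  have htr : (A * D).trace = ((r1 - r2 : ℝ) : ℂ) := by
    rw [hDdef, Matrix.mul_sub, Matrix.trace_sub, hMom, hHaarVal]
    push_cast
    ring
  have hQ : (0:ℝ) < (q:ℝ) ^ (2 * s) := by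
    have h1 : (1:ℝ) ≤ (q:ℝ) := by exact_mod_cast hq
    positivity
  have hcard : (Fintype.card ((Fin s → Fin q) × (Fin s → Fin q)) : ℝ) = (q:ℝ) ^ (2 * s) := by
    simp [Fintype.card_prod, Fintype.card_fun, two_mul, pow_add]
  have e1 : (∑ k, p k * (‖(Vᴴ * (U k : Matrix (Fin q) (Fin q) ℂ)).trace‖ / q) ^ (2 * s))
      = r1 / (q:ℝ) ^ (2 * s) := by
    rw [hr1, Finset.sum_div]
    simp_rw [div_pow, mul_div_assoc]
  have e2 : (∫ W, (‖(Vᴴ * (W : Matrix.unitaryGroup (Fin q) ℂ) : Matrix (Fin q) (Fin q) ℂ).trace‖ / q) ^ (2 * s) ∂μ)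
      = r2 / (q:ℝ) ^ (2 * s) := by
    simp_rw [div_pow]
    exact integral_div _ _
  rw [e1, e2, div_sub_div_same, abs_div, abs_of_pos hQ, div_le_iff₀ hQ]
  have habs : |r1 - r2| = ‖(A * D).trace‖ := by
    rw [htr, Complex.norm_real, Real.norm_eq_abs]
  rw [habs]
  calc ‖(A * D).trace‖
      ≤ (Fintype.card ((Fin s → Fin q) × (Fin s → Fin q)) : ℝ) * opNorm D :=
        abs_trace_mul_le A D hAu2
    _ = opNorm D * (q:ℝ) ^ (2 * s) := by rw [hcard, mul_comm]
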